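/- arXiv:2109.09070 — 3 statements merged into one kernel-verified Lean document; each statement's English description precedes it below -/
import Mathlib

section
/- For every α ≥ 0 and every z ≥ 0, the entire function h_α(z) = 2^{-α} ∑_{n=0}^∞ (z/2)^{2n} / (n! Γ(n+α+1)) satisfies h_α''(z)/h_α(z) + z^{-1} h_α'(z)/h_α(z) − (h_α'(z)/h_α(z))^2 > 0 (with the middle term interpreted via its limit at z = 0). -/
/-- `h_α(z) = 2^{-α} ∑_{n≥0} (z/2)^{2n}/(n! Γ(n+α+1))`. -/
noncomputable def hA (α z : ℝ) : ℝ :=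
  (2 : ℝ) ^ (-α) * ∑' n : ℕ, (z / 2) ^ (2 * n) / ((n.factorial : ℝ) * Real.Gamma ((n : ℝ) + α + 1))

open Real Filter

namespace Stmt0Aux

noncomputable def a (α : ℝ) (n : ℕ) : ℝ :=
  1 / ((n.factorial : ℝ) * Real.Gamma ((n : ℝ) + α + 1))

noncomputable def g (α t : ℝ) : ℝ := ∑' n : ℕ, a α n * t ^ n

lemma a_pos {α : ℝ} (hα : 0 ≤ α) (n : ℕ) : 0 < a α n := by
  have h1 : (0:ℝ) < (n:ℝ) + α + 1 := by positivity
  have := Real.Gamma_pos_of_pos h1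
  have hf : (0:ℝ) < (n.factorial : ℝ) := by positivity
  unfold a; positivity

lemma a_succ {α : ℝ} (hα : 0 ≤ α) (n : ℕ) :
    a α (n + 1) = a α n / (((n:ℝ) + 1) * ((n:ℝ) + α + 1)) := by
  have h1 : ((n:ℝ) + α + 1) ≠ 0 := by positivity
  unfold a
  rw [show ((n + 1 : ℕ) : ℝ) + α + 1 = ((n:ℝ) + α + 1) + 1 by push_cast; ring,
    Real.Gamma_add_one h1, Nat.factorial_succ]
  push_cast
  field_simp

lemma a_shift {α : ℝ} (hα : 0 ≤ α) (n : ℕ) :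
    ((n:ℝ) + 1) * a α (n + 1) = a (α + 1) n := by
  have h1 : ((n:ℝ) + α + 1) ≠ 0 := by positivity
  rw [a_succ hα]
  unfold a
  rw [show (n:ℝ) + (α + 1) + 1 = ((n:ℝ) + α + 1) + 1 by ring, Real.Gamma_add_one h1]
  have hn : ((n:ℝ) + 1) ≠ 0 := by positivity
  have hf : (n.factorial : ℝ) ≠ 0 := by positivity
  have hg : Real.Gamma ((n:ℝ) + α + 1) ≠ 0 := by
    exact (Real.Gamma_pos_of_pos (by positivity)).ne'
  field_simp

lemma summable_a {α : ℝ} (hα : 0 ≤ α) (t : ℝ) :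
    Summable (fun n : ℕ => a α n * t ^ n) := by
  apply summable_of_ratio_norm_eventually_le (r := 1/2) (by norm_num)
  filter_upwards [Filter.eventually_ge_atTop ⌈2 * |t|⌉₊] with n hn
  have hpos : 0 < a α n := a_pos hα n
  have hpos1 : 0 < a α (n+1) := a_pos hα (n+1)
  rw [a_succ hα]
  have h1 : (0:ℝ) < ((n:ℝ) + 1) * ((n:ℝ) + α + 1) := by positivity
  have h2 : 2 * |t| ≤ (n:ℝ) + 1 := by
    calc 2 * |t| ≤ (⌈2 * |t|⌉₊ : ℝ) := Nat.le_ceil _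
    _ ≤ (n:ℝ) := by exact_mod_cast hn
    _ ≤ (n:ℝ) + 1 := by linarith
  have h3 : (n:ℝ) + 1 ≤ ((n:ℝ) + 1) * ((n:ℝ) + α + 1) := by nlinarith [Nat.cast_nonneg (α := ℝ) n]
  rw [Real.norm_eq_abs, Real.norm_eq_abs, abs_mul, abs_mul, abs_pow, abs_pow, pow_succ,
    abs_div, abs_of_pos hpos, abs_of_pos h1]
  have key : a α n / (((n:ℝ)+1) * ((n:ℝ)+α+1)) * |t| ≤ 1/2 * a α n := by
    rw [div_mul_eq_mul_div, div_le_iff₀ h1]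
    nlinarith [abs_nonneg t, hpos.le]
  calc a α n / (((n:ℝ)+1) * ((n:ℝ)+α+1)) * (|t|^n * |t|)
      = (a α n / (((n:ℝ)+1) * ((n:ℝ)+α+1)) * |t|) * |t|^n := by ring
    _ ≤ (1/2 * a α n) * |t|^n := mul_le_mul_of_nonneg_right key (by positivity)
    _ = 1/2 * (a α n * |t|^n) := by ring


lemma summable_na {β : ℝ} (hβ : 0 ≤ β) (t : ℝ) :
    Summable (fun n : ℕ => (n:ℝ) * (a β n * t ^ n)) := by
  rw [← summable_nat_add_iff 1]
  have : (fun n : ℕ => ((n + 1 : ℕ):ℝ) * (a β (n+1) * t ^ (n+1)))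
      = fun n : ℕ => t * (a (β+1) n * t ^ n) := by
    funext n
    push_cast
    rw [← a_shift hβ, pow_succ]
    ring
  rw [this]
  exact (summable_a (by linarith) t).mul_left t

lemma tsum_na {β : ℝ} (hβ : 0 ≤ β) (t : ℝ) :
    ∑' n : ℕ, (n:ℝ) * (a β n * t ^ n) = t * g (β + 1) t := by
  rw [Summable.tsum_eq_zero_add (summable_na hβ t)]
  simp only [Nat.cast_zero, zero_mul, zero_add]
  have : (fun n : ℕ => ((n + 1 : ℕ):ℝ) * (a β (n+1) * t ^ (n+1)))
      = fun n : ℕ => t * (a (β+1) n * t ^ n) := by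
    funext n
    push_cast
    rw [← a_shift hβ, pow_succ]
    ring
  rw [this, tsum_mul_left]
  rfl

lemma g_pos {α : ℝ} (hα : 0 ≤ α) {t : ℝ} (ht : 0 ≤ t) : 0 < g α t := by
  apply Summable.tsum_pos (summable_a hα t)
    (fun n => mul_nonneg (a_pos hα n).le (pow_nonneg ht n)) 0
  simpa using (a_pos hα 0)

lemma g_hasDerivAt {α : ℝ} (hα : 0 ≤ α) (t : ℝ) :
    HasDerivAt (g α) (g (α + 1) t) t := by
  set R : ℝ := |t| + 1 with hR
  have hR0 : (0:ℝ) < R := by positivity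
  have hmem : t ∈ Metric.ball (0:ℝ) R := by
    rw [Metric.mem_ball, Real.dist_eq, sub_zero, hR]
    linarith [abs_nonneg t]
  have hu : Summable (fun n : ℕ => (n:ℝ) * a α n * R ^ (n - 1)) := by
    rw [← summable_nat_add_iff 1]
    have : (fun n : ℕ => ((n + 1:ℕ):ℝ) * a α (n+1) * R ^ (n + 1 - 1))
        = fun n : ℕ => a (α+1) n * R ^ n := by
      funext n
      push_cast
      rw [← a_shift hα]
    rw [this]
    exact summable_a (by linarith) R
  have key : HasDerivAt (fun x => ∑' n : ℕ, a α n * x ^ n)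
      (∑' n : ℕ, a α n * ((n:ℝ) * t ^ (n - 1))) t := by
    apply hasDerivAt_tsum_of_isPreconnected hu Metric.isOpen_ball
      ((convex_ball (0:ℝ) R).isPreconnected) (g := fun n x => a α n * x ^ n)
      (g' := fun n x => a α n * ((n:ℝ) * x ^ (n - 1)))
      (fun n x _ => (hasDerivAt_pow n x).const_mul (a α n))
      (fun n x hx => ?_) (Metric.mem_ball_self hR0) (summable_a hα 0) hmem
    have hx' : |x| ≤ R := by
      rw [Metric.mem_ball, Real.dist_eq, sub_zero] at hx
      exact hx.le
    have hap := (a_pos hα n).le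
    rw [Real.norm_eq_abs, abs_mul, abs_mul, abs_of_nonneg hap, abs_pow]
    calc a α n * ((|(n:ℝ)|) * |x| ^ (n-1)) ≤ a α n * ((n:ℝ) * R ^ (n-1)) := by
          apply mul_le_mul_of_nonneg_left _ hap
          apply mul_le_mul (by simp) (pow_le_pow_left₀ (abs_nonneg x) hx' _) (by positivity) (by positivity)
      _ = (n:ℝ) * a α n * R ^ (n-1) := by ring
  have hterm : (fun n : ℕ => a α (n+1) * (((n + 1:ℕ):ℝ) * t ^ (n + 1 - 1)))
      = fun n : ℕ => a (α+1) n * t ^ n := by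
    funext n
    push_cast
    rw [← a_shift hα]
    ring
  have heq : (∑' n : ℕ, a α n * ((n:ℝ) * t ^ (n - 1))) = g (α + 1) t := by
    have hs : Summable (fun n : ℕ => a α n * ((n:ℝ) * t ^ (n - 1))) := by
      rw [← summable_nat_add_iff 1]
      exact hterm ▸ summable_a (by linarith) t
    rw [Summable.tsum_eq_zero_add hs]
    simp only [Nat.cast_zero, mul_zero, zero_mul, zero_add]
    rw [hterm]
    rfl
  rw [← heq]
  exact key


noncomputable def tau : ℕ × ℕ ≃ ℕ × ℕ where
  toFun p := if p.2 = 0 then p else (p.2 - 1, p.1 + 1)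
  invFun p := if p.2 = 0 then p else (p.2 - 1, p.1 + 1)
  left_inv p := by rcases p with ⟨j, m⟩; cases m <;> simp
  right_inv p := by rcases p with ⟨j, m⟩; cases m <;> simp

set_option maxHeartbeats 1000000 in
lemma E_pos {α : ℝ} (hα : 0 ≤ α) {t : ℝ} (ht : 0 ≤ t) :
    0 < (g (α+1) t + t * g (α+2) t) * g α t - t * (g (α+1) t) ^ 2 := by
  set f : ℕ × ℕ → ℝ := fun p =>
    ((p.1:ℝ) + 1) * (((p.1:ℝ) + 1) - (p.2:ℝ)) * (a α (p.1 + 1) * a α p.2) * t ^ (p.1 + p.2)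
    with hf
  -- single-variable sums
  have hu1 : Summable (fun j : ℕ => ((j:ℝ) + 1) * (a (α+1) j * t ^ j)) := by
    have := (summable_na (by linarith) t (β := α+1)).add
      (summable_a (by linarith) t (α := α+1))
    convert this using 2 with j
    ring
  have hu2 : Summable (fun m : ℕ => (m:ℝ) * (a α m * t ^ m)) := summable_na hα t
  have ha0 : Summable (fun m : ℕ => a α m * t ^ m) := summable_a hα t
  have ha1 : Summable (fun m : ℕ => a (α+1) m * t ^ m) := summable_a (by linarith) t
  have hnn0 : ∀ m : ℕ, 0 ≤ a α m * t ^ m := fun m => mul_nonneg (a_pos hα m).le (pow_nonneg ht m)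
  have hnn1 : ∀ j : ℕ, 0 ≤ ((j:ℝ) + 1) * (a (α+1) j * t ^ j) := fun j =>
    mul_nonneg (by positivity) (mul_nonneg (a_pos (by linarith) j).le (pow_nonneg ht j))
  have hnn1' : ∀ m : ℕ, 0 ≤ a (α+1) m * t ^ m := fun m =>
    mul_nonneg (a_pos (by linarith) m).le (pow_nonneg ht m)
  have hnn2 : ∀ m : ℕ, 0 ≤ (m:ℝ) * (a α m * t ^ m) := fun m =>
    mul_nonneg (by positivity) (hnn0 m)
  have hsum1 : ∑' j : ℕ, ((j:ℝ) + 1) * (a (α+1) j * t ^ j) = g (α+1) t + t * g (α+2) t := by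
    have : (fun j : ℕ => ((j:ℝ) + 1) * (a (α+1) j * t ^ j))
        = fun j : ℕ => (j:ℝ) * (a (α+1) j * t ^ j) + a (α+1) j * t ^ j := by
      funext j; ring
    rw [this, Summable.tsum_add (summable_na (by linarith) t) ha1,
      tsum_na (by linarith) t, show α + 1 + 1 = α + 2 by ring]
    rw [add_comm]
    rfl
  have hsum2 : ∑' m : ℕ, (m:ℝ) * (a α m * t ^ m) = t * g (α+1) t := tsum_na hα t
  -- products
  have hP1 : Summable (fun p : ℕ × ℕ =>
      (((p.1:ℝ) + 1) * (a (α+1) p.1 * t ^ p.1)) * (a α p.2 * t ^ p.2)) :=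
    hu1.mul_of_nonneg ha0 hnn1 hnn0
  have hP2 : Summable (fun p : ℕ × ℕ =>
      (a (α+1) p.1 * t ^ p.1) * ((p.2:ℝ) * (a α p.2 * t ^ p.2))) :=
    ha1.mul_of_nonneg hu2 hnn1' hnn2
  have e1 : (g (α+1) t + t * g (α+2) t) * g α t = ∑' p : ℕ × ℕ,
      (((p.1:ℝ) + 1) * (a (α+1) p.1 * t ^ p.1)) * (a α p.2 * t ^ p.2) := by
    rw [← hsum1]
    exact Summable.tsum_mul_tsum hu1 ha0 hP1
  have e2 : t * (g (α+1) t) ^ 2 = ∑' p : ℕ × ℕ,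
      (a (α+1) p.1 * t ^ p.1) * ((p.2:ℝ) * (a α p.2 * t ^ p.2)) := by
    rw [← Summable.tsum_mul_tsum ha1 hu2 hP2, hsum2]
    unfold g
    ring
  have hterm : ∀ p : ℕ × ℕ,
      (((p.1:ℝ) + 1) * (a (α+1) p.1 * t ^ p.1)) * (a α p.2 * t ^ p.2)
        - (a (α+1) p.1 * t ^ p.1) * ((p.2:ℝ) * (a α p.2 * t ^ p.2)) = f p := by
    rintro ⟨j, m⟩
    simp only [hf, ← a_shift hα j, pow_add]
    ring
  have hfs : Summable f := by
    have := hP1.sub hP2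
    refine this.congr (fun p => ?_)
    exact (hterm p)
  have hEf : (g (α+1) t + t * g (α+2) t) * g α t - t * (g (α+1) t) ^ 2 = ∑' p, f p := by
    rw [e1, e2, ← Summable.tsum_sub hP1 hP2]
    exact tsum_congr hterm
  rw [hEf]
  -- symmetrization
  have htau : ∑' p, f p = ∑' p, f (tau p) := (tau.tsum_eq f).symm
  have hfts : Summable (fun p => f (tau p)) := tau.summable_iff.2 hfs
  have h2 : (2:ℝ) * ∑' p, f p = ∑' p, (f p + f (tau p)) := by
    rw [Summable.tsum_add hfs hfts, ← htau]
    ring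
  have hpos : 0 < ∑' p, (f p + f (tau p)) := by
    apply Summable.tsum_pos (hfs.add hfts) _ ((0,0) : ℕ × ℕ)
    · have : f ((0,0) : ℕ × ℕ) + f (tau ((0,0) : ℕ × ℕ)) = 2 * (a α 1 * a α 0) := by
        simp only [hf, tau]
        norm_num
        ring
      rw [this]
      have := a_pos hα 0
      have := a_pos hα 1
      positivity
    · rintro ⟨j, m⟩
      rcases Nat.eq_zero_or_pos m with rfl | hm
      · have : tau ((j, 0) : ℕ × ℕ) = (j, 0) := by simp [tau]
        rw [this]
        have h1 : f ((j, 0) : ℕ × ℕ) = ((j:ℝ)+1)^2 * ((a α (j+1) * a α 0) * t ^ j) := by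
          simp only [hf]
          push_cast
          ring_nf
        have h2 : 0 ≤ ((j:ℝ)+1)^2 * ((a α (j+1) * a α 0) * t ^ j) := by
          have := (a_pos hα (j+1)).le
          have := (a_pos hα 0).le
          positivity
        rw [h1]
        linarith
      · obtain ⟨k, rfl⟩ := Nat.exists_eq_add_of_lt hm
        have htau' : tau ((j, 0 + k + 1) : ℕ × ℕ) = (k, j + 1) := by simp [tau]
        rw [htau']
        have hkey : f ((j, 0 + k + 1) : ℕ × ℕ) + f ((k, j + 1) : ℕ × ℕ)
            = ((j:ℝ) - (k:ℝ)) ^ 2 * ((a α (j+1) * a α (k+1)) * t ^ (j + k + 1)) := by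
          simp only [hf]
          rw [show j + (0 + k + 1) = j + k + 1 by omega, show k + (j + 1) = j + k + 1 by omega]
          push_cast
          ring
        rw [hkey]
        have := (a_pos hα (j+1)).le
        have := (a_pos hα (k+1)).le
        positivity
  linarith



lemma hA_eq (α : ℝ) : hA α = fun z => (2:ℝ) ^ (-α) * g α (z ^ 2 / 4) := by
  funext z
  unfold hA g
  congr 1
  apply tsum_congr
  intro n
  rw [pow_mul, div_pow, a]
  norm_num
  rw [div_eq_mul_one_div]
  ring_nf

lemma sq_div_hasDeriv (z : ℝ) : HasDerivAt (fun z : ℝ => z ^ 2 / 4) (z / 2) z := by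
  have := (hasDerivAt_pow 2 z).div_const 4
  refine this.congr_deriv ?_
  push_cast
  ring

lemma hA_hasDerivAt {α : ℝ} (hα : 0 ≤ α) (z : ℝ) :
    HasDerivAt (hA α) ((2:ℝ) ^ (-α) * (z / 2 * g (α+1) (z ^ 2 / 4))) z := by
  rw [hA_eq]
  apply HasDerivAt.const_mul
  have h1 := (g_hasDerivAt hα (z ^ 2 / 4)).comp z (sq_div_hasDeriv z)
  refine h1.congr_deriv ?_
  ring

lemma deriv_hA {α : ℝ} (hα : 0 ≤ α) :
    deriv (hA α) = fun z => (2:ℝ) ^ (-α) * (z / 2 * g (α+1) (z ^ 2 / 4)) := by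
  funext z
  exact (hA_hasDerivAt hα z).deriv

lemma deriv2_hA {α : ℝ} (hα : 0 ≤ α) (z : ℝ) :
    deriv (deriv (hA α)) z
      = (2:ℝ) ^ (-α) * (g (α+1) (z ^ 2 / 4) / 2 + z ^ 2 / 4 * g (α+2) (z ^ 2 / 4)) := by
  rw [deriv_hA hα]
  have h1 : HasDerivAt (fun z : ℝ => z / 2) (1 / 2 : ℝ) z := by
    simpa using (hasDerivAt_id z).div_const 2
  have h2 : HasDerivAt (fun z : ℝ => g (α+1) (z ^ 2 / 4)) (g (α+2) (z ^ 2 / 4) * (z / 2)) z := by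
    have h := (g_hasDerivAt (α := α+1) (by linarith : (0:ℝ) ≤ α+1) (z ^ 2 / 4)).comp z
      (sq_div_hasDeriv z)
    rw [show α + 1 + 1 = α + 2 by ring] at h
    exact h
  have h3 : HasDerivAt (fun z : ℝ => (2:ℝ) ^ (-α) * (z / 2 * g (α+1) (z ^ 2 / 4))) _ z := (h1.mul h2).const_mul ((2:ℝ) ^ (-α))
  rw [h3.deriv]
  ring

end Stmt0Aux

open Stmt0Aux in
/-- For every `α ≥ 0` and `z ≥ 0`,
`h_α''(z)/h_α(z) + z⁻¹ h_α'(z)/h_α(z) − (h_α'(z)/h_α(z))² > 0`,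
the middle term at `z = 0` being interpreted via its limit `h_α''(0)/h_α(0)`. -/
theorem stmt0 (α : ℝ) (hα : 0 ≤ α) (z : ℝ) (hz : 0 ≤ z) :
    0 < deriv (deriv (hA α)) z / hA α z
      + (if z = 0 then deriv (deriv (hA α)) 0 / hA α 0
          else z⁻¹ * (deriv (hA α) z / hA α z))
      - (deriv (hA α) z / hA α z) ^ 2 := by
  have hC : (0:ℝ) < (2:ℝ) ^ (-α) := Real.rpow_pos_of_pos (by norm_num) _
  have ht : (0:ℝ) ≤ z ^ 2 / 4 := by positivity
  set t := z ^ 2 / 4 with htdef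
  have hG0 : 0 < g α t := g_pos hα ht
  have hG1 : 0 < g (α+1) t := g_pos (by linarith) ht
  have hH : hA α z = (2:ℝ) ^ (-α) * g α t := by rw [hA_eq]
  have hD1 : deriv (hA α) z = (2:ℝ) ^ (-α) * (z / 2 * g (α+1) t) := by rw [deriv_hA hα]
  have hD2 : deriv (deriv (hA α)) z
      = (2:ℝ) ^ (-α) * (g (α+1) t / 2 + t * g (α+2) t) := deriv2_hA hα z
  rcases eq_or_lt_of_le hz with rfl | hz'
  · simp only [if_pos rfl]
    have h00 : (0:ℝ) ^ 2 / 4 = 0 := by norm_num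
    rw [hD1, hD2, hH]
    rw [htdef] at *
    rw [h00] at *
    have hg0 : 0 < g α 0 := g_pos hα le_rfl
    have hg1 : 0 < g (α+1) 0 := g_pos (by linarith) le_rfl
    have hCne : ((2:ℝ) ^ (-α)) ≠ 0 := hC.ne'
    have e1 : (2:ℝ) ^ (-α) * ((0:ℝ) / 2 * g (α+1) 0) = 0 := by ring
    rw [e1]
    have e2 : (2:ℝ) ^ (-α) * (g (α+1) 0 / 2 + 0 * g (α+2) 0) / ((2:ℝ) ^ (-α) * g α 0)
        = g (α+1) 0 / (2 * g α 0) := by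
      field_simp
      ring
    rw [e2]
    have : 0 < g (α+1) 0 / (2 * g α 0) := by positivity
    norm_num
    linarith
  · rw [if_neg hz'.ne']
    rw [hD1, hD2, hH]
    have hzne : z ≠ 0 := hz'.ne'
    have hCne : ((2:ℝ) ^ (-α)) ≠ 0 := hC.ne'
    have hG0ne : g α t ≠ 0 := hG0.ne'
    have key : deriv (deriv (hA α)) z = deriv (deriv (hA α)) z := rfl
    have hexpr : (2:ℝ) ^ (-α) * (g (α+1) t / 2 + t * g (α+2) t) / ((2:ℝ) ^ (-α) * g α t)
        + z⁻¹ * ((2:ℝ) ^ (-α) * (z / 2 * g (α+1) t) / ((2:ℝ) ^ (-α) * g α t))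
        - ((2:ℝ) ^ (-α) * (z / 2 * g (α+1) t) / ((2:ℝ) ^ (-α) * g α t)) ^ 2
        = ((g (α+1) t + t * g (α+2) t) * g α t - t * (g (α+1) t) ^ 2) / (g α t) ^ 2 := by
      rw [htdef]
      field_simp
      ring
    rw [hexpr]
    exact div_pos (E_pos hα ht) (by positivity)
end

section
/- Fix α ≥ 0 and t > 0. Define the squared Bessel transition density q_t(x,y) = (1/2) t^{-α-1} y^α e^{-(x+y)/(2t)} h_α(√(xy)/t) for x, y ≥ 0, where h_α(z) = 2^{-α} ∑_{n≥0} (z/2)^{2n}/(n! Γ(n+α+1)). Then for all x, y > 0, the mixed second partial derivative ∂²/∂x∂y of log q_t(x,y) is strictly positive. -/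
/-- The squared Bessel transition density of index `α`:
`q_t(x,y) = (1/2) t^{-α-1} y^α e^{-(x+y)/(2t)} h_α(√(xy)/t)`. -/
noncomputable def qK (α t x y : ℝ) : ℝ :=
  (1 / 2) * t ^ (-α - 1) * y ^ α * Real.exp (-(x + y) / (2 * t)) *
    hA α (Real.sqrt (x * y) / t)

noncomputable def bC (α : ℝ) (n : ℕ) : ℝ :=
  (2:ℝ)^(-α) / (4^n * n.factorial * Real.Gamma ((n:ℝ) + α + 1))

lemma bC_pos {α : ℝ} (hα : 0 ≤ α) (n : ℕ) : 0 < bC α n := by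
  have hg : 0 < Real.Gamma ((n:ℝ) + α + 1) :=
    Real.Gamma_pos_of_pos (by positivity)
  have h4 : (0:ℝ) < 4^n := by positivity
  have hf : (0:ℝ) < n.factorial := by positivity
  exact div_pos (Real.rpow_pos_of_pos two_pos _) (by positivity)

lemma gamma_lb {α : ℝ} (hα : 0 ≤ α) (n : ℕ) :
    (n.factorial : ℝ) * Real.Gamma (α + 1) ≤ Real.Gamma ((n:ℝ) + α + 1) := by
  induction n with
  | zero => simp
  | succ n ih =>
    have hne : (n:ℝ) + α + 1 ≠ 0 := by positivity
    have h : Real.Gamma ((↑(n+1):ℝ) + α + 1) = ((n:ℝ) + α + 1) * Real.Gamma ((n:ℝ) + α + 1) := by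
      rw [show ((↑(n+1):ℝ) + α + 1) = ((n:ℝ) + α + 1) + 1 by push_cast; ring,
        Real.Gamma_add_one hne]
    rw [h]
    have hg : 0 < Real.Gamma (α + 1) := Real.Gamma_pos_of_pos (by positivity)
    calc (((n+1).factorial : ℕ) : ℝ) * Real.Gamma (α + 1)
        = ((n:ℝ) + 1) * ((n.factorial : ℝ) * Real.Gamma (α + 1)) := by
          rw [Nat.factorial_succ]; push_cast; ring
      _ ≤ ((n:ℝ) + 1) * Real.Gamma ((n:ℝ) + α + 1) := by
          apply mul_le_mul_of_nonneg_left ih (by positivity)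
      _ ≤ ((n:ℝ) + α + 1) * Real.Gamma ((n:ℝ) + α + 1) := by
          apply mul_le_mul_of_nonneg_right (by linarith)
            (Real.Gamma_pos_of_pos (by positivity)).le

lemma summable_master {α : ℝ} (hα : 0 ≤ α) {r : ℝ} (hr : 0 ≤ r) :
    Summable (fun n : ℕ => ((n:ℝ)+1)^2 * bC α n * r^n) := by
  have hg : 0 < Real.Gamma (α + 1) := Real.Gamma_pos_of_pos (by positivity)
  set K : ℝ := 4 * (2:ℝ)^(-α) / Real.Gamma (α + 1) with hK
  apply Summable.of_nonneg_of_le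
    (fun n => mul_nonneg (mul_nonneg (sq_nonneg _) (bC_pos hα n).le) (pow_nonneg hr n))
    (fun n => ?_)
    (((Real.summable_pow_div_factorial r).mul_left K))
  have h1 : ((n:ℝ)+1)^2 ≤ 4 * 4^n := by
    have h0 : (n:ℝ) + 1 ≤ 2 * 2^n := by
      have h := Nat.lt_two_pow_self (n := n)
      have h' : (n:ℝ) < 2^n := by exact_mod_cast h
      have h2 : (1:ℝ) ≤ 2^n := one_le_pow₀ one_le_two
      linarith
    calc ((n:ℝ)+1)^2 ≤ (2 * 2^n)^2 := by
          apply pow_le_pow_left₀ (by positivity) h0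
      _ = 4 * 4^n := by
          rw [mul_pow, ← pow_mul, mul_comm n 2, pow_mul]; norm_num
  have h2 : bC α n ≤ (2:ℝ)^(-α) / (4^n * n.factorial * (n.factorial * Real.Gamma (α+1))) := by
    rw [bC]
    exact div_le_div_of_nonneg_left (by positivity) (by positivity)
      (mul_le_mul_of_nonneg_left (gamma_lb hα n) (by positivity))
  have h3 : (0:ℝ) < (n.factorial:ℝ) := by positivity
  have hfge : (1:ℝ) ≤ (n.factorial:ℝ) := by exact_mod_cast n.factorial_pos
  have h4 : (0:ℝ) < (4:ℝ)^n := by positivity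
  have hbn := (bC_pos hα n).le
  have h2a : (0:ℝ) < (2:ℝ)^(-α) := Real.rpow_pos_of_pos two_pos _
  calc ((n:ℝ)+1)^2 * bC α n * r^n
      ≤ (4 * 4^n) * ((2:ℝ)^(-α) / (4^n * n.factorial * (n.factorial * Real.Gamma (α+1)))) * r^n := by
        apply mul_le_mul_of_nonneg_right _ (by positivity)
        exact mul_le_mul h1 h2 hbn (by positivity)
    _ = (4 * (2:ℝ)^(-α)) * r^n / ((n.factorial:ℝ) * n.factorial * Real.Gamma (α+1)) := by
        field_simp
    _ ≤ (4 * (2:ℝ)^(-α)) * r^n / ((n.factorial:ℝ) * Real.Gamma (α+1)) := by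
        apply div_le_div_of_nonneg_left (by positivity) (by positivity)
        nlinarith [mul_nonneg (mul_nonneg h3.le hg.le) (sub_nonneg.mpr hfge)]
    _ = K * (r^n / n.factorial) := by rw [hK]; ring

lemma summable_of_bound {α : ℝ} (hα : 0 ≤ α) {r : ℝ} (hr : 0 ≤ r) (f : ℕ → ℝ)
    (hf : ∀ n, |f n| ≤ ((n:ℝ)+1)^2 * bC α n * r^n) : Summable f :=
  Summable.of_abs (Summable.of_nonneg_of_le (fun n => abs_nonneg _) hf (summable_master hα hr))

lemma summable_gen {α : ℝ} (hα : 0 ≤ α) (c : ℕ → ℝ) (e : ℕ → ℕ)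
    (hc : ∀ n, |c n| ≤ ((n:ℝ)+1)^2) (he : ∀ n, e n ≤ n) (u : ℝ) :
    Summable fun n => c n * bC α n * u ^ (e n) := by
  apply summable_of_bound hα (r := |u|+1) (by positivity)
  intro n
  have hb := bC_pos hα n
  have hu1 : (0:ℝ) ≤ |u| := abs_nonneg u
  rw [abs_mul, abs_mul, abs_of_pos hb, abs_pow]
  have h1 : |u| ^ (e n) ≤ (|u|+1)^n :=
    le_trans (pow_le_pow_left₀ hu1 (by linarith) _)
      (pow_le_pow_right₀ (by linarith) (he n))
  exact mul_le_mul (mul_le_mul_of_nonneg_right (hc n) hb.le) h1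
    (pow_nonneg hu1 _) (by positivity)

noncomputable def Hf (α u : ℝ) : ℝ := ∑' n : ℕ, bC α n * u ^ n
noncomputable def Hf1 (α u : ℝ) : ℝ := ∑' n : ℕ, (n:ℝ) * bC α n * u ^ (n-1)
noncomputable def Hf2 (α u : ℝ) : ℝ := ∑' n : ℕ, (n:ℝ) * ((n:ℝ)-1) * bC α n * u ^ (n-2)

lemma summable_Hf {α : ℝ} (hα : 0 ≤ α) (u : ℝ) : Summable fun n : ℕ => bC α n * u ^ n := by
  have := summable_gen hα (fun _ => 1) (fun n => n) (fun n => by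
    rw [abs_one]; nlinarith [Nat.cast_nonneg (α := ℝ) n]) (fun n => le_rfl) u
  simpa using this

lemma summable_Hf1 {α : ℝ} (hα : 0 ≤ α) (u : ℝ) :
    Summable fun n : ℕ => (n:ℝ) * bC α n * u ^ (n-1) :=
  summable_gen hα (fun n => (n:ℝ)) (fun n => n-1) (fun n => by
    rw [abs_of_nonneg (Nat.cast_nonneg n)]; nlinarith [Nat.cast_nonneg (α := ℝ) n])
    (fun n => Nat.sub_le n 1) u

lemma summable_Hf2 {α : ℝ} (hα : 0 ≤ α) (u : ℝ) :
    Summable fun n : ℕ => (n:ℝ) * ((n:ℝ)-1) * bC α n * u ^ (n-2) := by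
  have : ∀ n : ℕ, |(n:ℝ) * ((n:ℝ)-1)| ≤ ((n:ℝ)+1)^2 := by
    intro n
    rcases Nat.eq_zero_or_pos n with h | h
    · simp [h]
    · have h1 : (1:ℝ) ≤ (n:ℝ) := by exact_mod_cast h
      rw [abs_of_nonneg (by nlinarith)]; nlinarith
  exact summable_gen hα (fun n => (n:ℝ) * ((n:ℝ)-1)) (fun n => n-2) this
    (fun n => Nat.sub_le n 2) u

lemma hasDerivAt_Hf {α : ℝ} (hα : 0 ≤ α) (u : ℝ) : HasDerivAt (Hf α) (Hf1 α u) u := by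
  set R : ℝ := |u| + 1 with hR
  have hRpos : (0:ℝ) < R := by positivity
  have hmem : ∀ {v : ℝ}, |v| < R → v ∈ Metric.ball (0:ℝ) R := by
    intro v hv; simpa [Metric.mem_ball, Real.dist_eq] using hv
  have hb : Summable fun n : ℕ => (n:ℝ) * bC α n * R ^ (n-1) := summable_Hf1 hα R
  have H := hasDerivAt_tsum_of_isPreconnected hb Metric.isOpen_ball
    (convex_ball (0:ℝ) R).isPreconnected
    (g := fun n y => bC α n * y ^ n)
    (g' := fun n y => (n:ℝ) * bC α n * y ^ (n-1))
    (fun n y _ => by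
      have := (hasDerivAt_pow n y).const_mul (bC α n)
      exact this.congr_deriv (by ring))
    (fun n y hy => ?_)
    (hmem (by simp [hRpos]))
    (summable_Hf hα 0)
    (hmem (by simp [hR]; linarith [abs_nonneg u]))
  · exact H
  · have hyR : |y| ≤ R := by
      have : dist y 0 < R := hy
      rw [Real.dist_eq, sub_zero] at this; linarith
    have hbn := (bC_pos hα n).le
    rw [Real.norm_eq_abs, abs_mul, abs_mul, abs_pow, Nat.abs_cast,
      abs_of_nonneg hbn]
    have : |y| ^ (n-1) ≤ R ^ (n-1) := pow_le_pow_left₀ (abs_nonneg y) hyR _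
    have hn : (0:ℝ) ≤ (n:ℝ) := Nat.cast_nonneg n
    nlinarith [pow_nonneg (abs_nonneg y) (n-1), mul_nonneg hn hbn]

lemma hasDerivAt_Hf1 {α : ℝ} (hα : 0 ≤ α) (u : ℝ) : HasDerivAt (Hf1 α) (Hf2 α u) u := by
  set R : ℝ := |u| + 1 with hR
  have hRpos : (0:ℝ) < R := by positivity
  have hmem : ∀ {v : ℝ}, |v| < R → v ∈ Metric.ball (0:ℝ) R := by
    intro v hv; simpa [Metric.mem_ball, Real.dist_eq] using hv
  have hb : Summable fun n : ℕ => (n:ℝ)*(n:ℝ) * bC α n * R ^ (n-2) := by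
    apply summable_gen hα (fun n => (n:ℝ)*(n:ℝ)) (fun n => n-2)
      (fun n => by
        show |(n:ℝ)*(n:ℝ)| ≤ ((n:ℝ)+1)^2
        rw [abs_of_nonneg (by positivity)]
        nlinarith [Nat.cast_nonneg (α := ℝ) n])
      (fun n => Nat.sub_le n 2)
  have H := hasDerivAt_tsum_of_isPreconnected hb Metric.isOpen_ball
    (convex_ball (0:ℝ) R).isPreconnected
    (g := fun (n : ℕ) y => (n:ℝ) * bC α n * y ^ (n-1))
    (g' := fun (n : ℕ) y => (n:ℝ) * bC α n * ((((n-1 : ℕ)):ℝ) * y ^ (n-1-1)))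
    (fun n y _ => (hasDerivAt_pow (n-1) y).const_mul ((n:ℝ) * bC α n))
    (fun n y hy => ?_)
    (hmem (by simpa using hRpos))
    (summable_Hf1 hα 0)
    (hmem (by rw [hR]; linarith))
  · have H' : HasDerivAt (Hf1 α) _ u := H
    convert H' using 1
    · rw [Hf2]
      apply tsum_congr
      intro n
      match n with
      | 0 => simp
      | (m+1) =>
        show _ = (↑(m+1):ℝ) * bC α (m+1) * ((↑((m+1) - 1):ℝ) * u ^ ((m+1) - 1 - 1))
        have e1 : (m+1) - 1 - 1 = (m+1) - 2 := by omega
        have e2 : ((m+1) - 1 : ℕ) = m := by omega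
        rw [e1, e2]
        push_cast
        ring
  · have hyR : |y| ≤ R := by
      have : dist y 0 < R := hy
      rw [Real.dist_eq, sub_zero] at this; linarith
    have hbn := (bC_pos hα n).le
    have hn : (0:ℝ) ≤ (n:ℝ) := Nat.cast_nonneg n
    have hn1 : ((n-1:ℕ):ℝ) ≤ (n:ℝ) := by exact_mod_cast Nat.sub_le n 1
    have hn1' : (0:ℝ) ≤ ((n-1:ℕ):ℝ) := Nat.cast_nonneg _
    rw [Real.norm_eq_abs, abs_mul, abs_mul, abs_mul, abs_pow, Nat.abs_cast, Nat.abs_cast,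
      abs_of_nonneg hbn, Nat.sub_sub]
    have hpow : |y| ^ (n-2) ≤ R ^ (n-2) := pow_le_pow_left₀ (abs_nonneg y) hyR _
    have h0 : (0:ℝ) ≤ |y| ^ (n-2) := pow_nonneg (abs_nonneg y) _
    have h0R : (0:ℝ) ≤ R ^ (n-2) := pow_nonneg hRpos.le _
    calc (n:ℝ) * bC α n * (((n-1:ℕ):ℝ) * |y| ^ (n-2))
        ≤ (n:ℝ) * bC α n * ((n:ℝ) * R ^ (n-2)) := by
          apply mul_le_mul_of_nonneg_left _ (mul_nonneg hn hbn)
          exact mul_le_mul hn1 hpow h0 hn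
      _ = (n:ℝ)*(n:ℝ) * bC α n * R ^ (n-2) := by ring

lemma Hf_pos {α : ℝ} (hα : 0 ≤ α) {u : ℝ} (hu : 0 ≤ u) : 0 < Hf α u :=
  Summable.tsum_pos (summable_Hf hα u) (fun n => mul_nonneg (bC_pos hα n).le (pow_nonneg hu n)) 0
    (by simpa using bC_pos hα 0)

lemma Hf1_pos {α : ℝ} (hα : 0 ≤ α) {u : ℝ} (hu : 0 ≤ u) : 0 < Hf1 α u :=
  Summable.tsum_pos (summable_Hf1 hα u)
    (fun n => mul_nonneg (mul_nonneg (Nat.cast_nonneg n) (bC_pos hα n).le) (pow_nonneg hu _)) 1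
    (by simpa using bC_pos hα 1)

lemma Hf2_nonneg {α : ℝ} (hα : 0 ≤ α) {u : ℝ} (hu : 0 ≤ u) : 0 ≤ Hf2 α u := by
  apply tsum_nonneg
  intro n
  match n with
  | 0 => simp
  | (m+1) =>
    have h1 : (0:ℝ) ≤ (↑(m+1):ℝ) - 1 := by push_cast; linarith [Nat.cast_nonneg (α := ℝ) m]
    have h2 := Nat.cast_nonneg (α := ℝ) (m+1)
    exact mul_nonneg (mul_nonneg (mul_nonneg h2 h1) (bC_pos hα _).le) (pow_nonneg hu _)

lemma tsum_cauchy_schwarz (x y : ℕ → ℝ) (hx : ∀ n, 0 ≤ x n) (hy : ∀ n, 0 ≤ y n)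
    (hx2 : Summable fun n => x n ^ 2) (hy2 : Summable fun n => y n ^ 2) :
    (∑' n, x n * y n) ^ 2 ≤ (∑' n, x n ^ 2) * (∑' n, y n ^ 2) := by
  set S := ∑' n, x n ^ 2 with hS
  set T := ∑' n, y n ^ 2 with hT
  have hS0 : 0 ≤ S := tsum_nonneg fun n => sq_nonneg _
  have hT0 : 0 ≤ T := tsum_nonneg fun n => sq_nonneg _
  have hxy : Summable fun n => x n * y n := by
    apply Summable.of_nonneg_of_le (fun n => mul_nonneg (hx n) (hy n))
      (fun n => ?_) (hx2.add hy2)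
    nlinarith [sq_nonneg (x n - y n)]
  have hb : ∀ s : Finset ℕ, ∑ n ∈ s, x n * y n ≤ Real.sqrt (S * T) := by
    intro s
    have h1 : (∑ n ∈ s, x n * y n) ^ 2 ≤ (∑ n ∈ s, x n ^ 2) * (∑ n ∈ s, y n ^ 2) :=
      Finset.sum_mul_sq_le_sq_mul_sq s x y
    have h2 : (∑ n ∈ s, x n ^ 2) ≤ S := Summable.sum_le_tsum s (fun i _ => sq_nonneg _) hx2
    have h3 : (∑ n ∈ s, y n ^ 2) ≤ T := Summable.sum_le_tsum s (fun i _ => sq_nonneg _) hy2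
    have h4 : (0:ℝ) ≤ ∑ n ∈ s, x n * y n :=
      Finset.sum_nonneg fun n _ => mul_nonneg (hx n) (hy n)
    rw [Real.le_sqrt h4 (mul_nonneg hS0 hT0)]
    calc (∑ n ∈ s, x n * y n) ^ 2 ≤ (∑ n ∈ s, x n ^ 2) * (∑ n ∈ s, y n ^ 2) := h1
      _ ≤ S * T := by
        apply mul_le_mul h2 h3 (Finset.sum_nonneg fun i _ => sq_nonneg _) hS0
  have h5 : ∑' n, x n * y n ≤ Real.sqrt (S * T) := Summable.tsum_le_of_sum_le hxy hb
  have h6 : (0:ℝ) ≤ ∑' n, x n * y n := tsum_nonneg fun n => mul_nonneg (hx n) (hy n)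
  calc (∑' n, x n * y n) ^ 2 ≤ Real.sqrt (S * T) ^ 2 := by
        apply pow_le_pow_left₀ h6 h5
    _ = S * T := Real.sq_sqrt (mul_nonneg hS0 hT0)

lemma key_ineq {α : ℝ} (hα : 0 ≤ α) {u : ℝ} (hu : 0 < u) :
    u * (Hf1 α u) ^ 2 < Hf α u * (Hf1 α u + u * Hf2 α u) := by
  classical
  set X : ℕ → ℝ := fun n => if n = 0 then 0 else Real.sqrt (bC α n * u ^ n) with hXdef
  set Y : ℕ → ℝ := fun n => (n:ℝ) * Real.sqrt (bC α n) * Real.sqrt (u ^ (n-1)) with hYdef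
  have hXnn : ∀ n, 0 ≤ X n := by
    intro n; rw [hXdef]; dsimp only
    split
    · exact le_refl 0
    · exact Real.sqrt_nonneg _
  have hYnn : ∀ n, 0 ≤ Y n := fun n =>
    mul_nonneg (mul_nonneg (Nat.cast_nonneg n) (Real.sqrt_nonneg _)) (Real.sqrt_nonneg _)
  have hX2 : ∀ n, X n ^ 2 = if n = 0 then 0 else bC α n * u ^ n := by
    intro n; rw [hXdef]; dsimp only
    split
    · norm_num
    · exact Real.sq_sqrt (mul_nonneg (bC_pos hα n).le (pow_nonneg hu.le n))
  have hY2 : ∀ n, Y n ^ 2 = (n:ℝ)^2 * bC α n * u ^ (n-1) := by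
    intro n; rw [hYdef]; dsimp only
    rw [mul_pow, mul_pow, Real.sq_sqrt (bC_pos hα n).le,
      Real.sq_sqrt (pow_nonneg hu.le _)]
  have hXY : ∀ n, X n * Y n = Real.sqrt u * ((n:ℝ) * bC α n * u ^ (n-1)) := by
    intro n
    match n with
    | 0 => simp [hXdef, hYdef]
    | (m+1) =>
      rw [hXdef, hYdef]; dsimp only
      rw [if_neg (Nat.succ_ne_zero m)]
      have e2 : (m+1) - 1 = m := rfl
      rw [e2, Real.sqrt_mul (bC_pos hα (m+1)).le]
      have h3 : Real.sqrt (u ^ (m+1)) * Real.sqrt (u ^ m) = Real.sqrt u * u ^ m := by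
        rw [← Real.sqrt_mul (pow_nonneg hu.le _), show u^(m+1) * u^m = u * (u^m)^2 by ring,
          Real.sqrt_mul hu.le, Real.sqrt_sq (pow_nonneg hu.le m)]
      calc Real.sqrt (bC α (m+1)) * Real.sqrt (u ^ (m+1)) *
            ((↑(m+1):ℝ) * Real.sqrt (bC α (m+1)) * Real.sqrt (u ^ m))
          = (↑(m+1):ℝ) * (Real.sqrt (bC α (m+1)) * Real.sqrt (bC α (m+1))) *
            (Real.sqrt (u ^ (m+1)) * Real.sqrt (u ^ m)) := by ring
        _ = Real.sqrt u * ((↑(m+1):ℝ) * bC α (m+1) * u ^ m) := by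
            rw [Real.mul_self_sqrt (bC_pos hα (m+1)).le, h3]; ring
  have sX2 : Summable fun n => X n ^ 2 := by
    apply Summable.of_nonneg_of_le (fun n => sq_nonneg _) (fun n => ?_) (summable_Hf hα u)
    rw [hX2 n]
    split
    · exact mul_nonneg (bC_pos hα _).le (pow_nonneg hu.le _)
    · exact le_refl _
  have sY2 : Summable fun n => Y n ^ 2 := by
    have := summable_gen hα (fun n => (n:ℝ)^2) (fun n => n - 1)
      (fun n => by
        show |(n:ℝ)^2| ≤ ((n:ℝ)+1)^2
        rw [abs_of_nonneg (sq_nonneg _)]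
        nlinarith [Nat.cast_nonneg (α := ℝ) n])
      (fun n => Nat.sub_le n 1) u
    apply this.congr
    intro n
    rw [hY2 n]
  have hcs := tsum_cauchy_schwarz X Y hXnn hYnn sX2 sY2
  -- compute the three tsums
  have T1 : ∑' n, X n * Y n = Real.sqrt u * Hf1 α u := by
    rw [show (fun n => X n * Y n) = fun (n : ℕ) => Real.sqrt u * ((n:ℝ) * bC α n * u ^ (n-1))
      from funext hXY, tsum_mul_left, Hf1]
  have T2 : ∑' n, X n ^ 2 = Hf α u - bC α 0 := by
    have e1 : ∑' n, X n ^ 2 = X 0 ^ 2 + ∑' n, X (n+1) ^ 2 := Summable.tsum_eq_zero_add sX2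
    have e2 : Hf α u = bC α 0 * u ^ 0 + ∑' n : ℕ, bC α (n+1) * u ^ (n+1) :=
      Summable.tsum_eq_zero_add (summable_Hf hα u)
    have e3 : ∀ n : ℕ, X (n+1) ^ 2 = bC α (n+1) * u ^ (n+1) := by
      intro n; rw [hX2]; simp
    have e2' : Hf α u = bC α 0 + ∑' n : ℕ, bC α (n+1) * u ^ (n+1) := by
      simpa using e2
    rw [e1, tsum_congr e3, hX2 0, if_pos rfl]
    linarith
  have T3 : ∑' n, Y n ^ 2 = Hf1 α u + u * Hf2 α u := by
    have e0 : ∑' n, Y n ^ 2 = ∑' n : ℕ, (n:ℝ)^2 * bC α n * u ^ (n-1) := tsum_congr hY2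
    rw [e0, Hf1, Hf2, ← tsum_mul_left,
      ← Summable.tsum_add (summable_Hf1 hα u) ((summable_Hf2 hα u).mul_left u)]
    apply tsum_congr
    intro n
    match n with
    | 0 => norm_num
    | 1 => norm_num
    | (m+2) =>
      have e1 : (m+2) - 1 = m+1 := rfl
      have e2 : (m+2) - 2 = m := rfl
      rw [e1, e2, show u ^ (m+1) = u ^ m * u from pow_succ u m]
      push_cast
      ring
  -- combine
  have hb0 : 0 < bC α 0 := bC_pos hα 0
  have hpos : 0 < Hf1 α u + u * Hf2 α u :=
    add_pos_of_pos_of_nonneg (Hf1_pos hα hu.le) (mul_nonneg hu.le (Hf2_nonneg hα hu.le))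
  have hsq : (Real.sqrt u * Hf1 α u) ^ 2 = u * (Hf1 α u) ^ 2 := by
    rw [mul_pow, Real.sq_sqrt hu.le]
  rw [T1, T2, T3, hsq] at hcs
  have hlt : (Hf α u - bC α 0) * (Hf1 α u + u * Hf2 α u) <
      Hf α u * (Hf1 α u + u * Hf2 α u) := by
    apply mul_lt_mul_of_pos_right _ hpos
    linarith
  linarith

lemma hA_eq (α z : ℝ) : hA α z = Hf α (z^2) := by
  rw [hA, Hf, ← tsum_mul_left]
  apply tsum_congr
  intro n
  rw [bC]
  have h1 : (z/2)^(2*n) = (z^2)^n/4^n := by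
    rw [pow_mul, show (z/2)^2 = z^2/4 by ring, div_pow]
  rw [h1]
  ring

lemma qK_eq {α t x' y' : ℝ} (ht : 0 < t) (hx' : 0 < x') (hy' : 0 < y') :
    qK α t x' y' = (1/2) * t^(-α-1) * y'^α * Real.exp (-(x'+y')/(2*t)) * Hf α (x'*y'/t^2) := by
  rw [qK, hA_eq]
  congr 2
  rw [div_pow, Real.sq_sqrt (mul_pos hx' hy').le]

lemma inner_deriv {α : ℝ} (hα : 0 ≤ α) {t : ℝ} (ht : 0 < t) {x' y : ℝ}
    (hx' : 0 < x') (hy : 0 < y) :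
    deriv (fun y' => Real.log (qK α t x' y')) y
      = α * y⁻¹ + (-1)/(2*t) + Hf1 α (x'*y/t^2) * (x'/t^2) / Hf α (x'*y/t^2) := by
  have ht2 : (0:ℝ) < t^2 := by positivity
  have hC : 0 < (1/2) * t^(-α-1) :=
    mul_pos one_half_pos (Real.rpow_pos_of_pos ht _)
  have hev : (fun y' => Real.log (qK α t x' y')) =ᶠ[nhds y]
      (fun y' => Real.log ((1/2) * t^(-α-1)) + α * Real.log y' + (-(x'+y')/(2*t))
        + Real.log (Hf α (x'*y'/t^2))) := by
    filter_upwards [eventually_gt_nhds hy] with y' hy'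
    rw [qK_eq ht hx' hy']
    have hH : 0 < Hf α (x'*y'/t^2) := Hf_pos hα (by positivity)
    have h1 : 0 < y'^α := Real.rpow_pos_of_pos hy' α
    have h2 : 0 < Real.exp (-(x'+y')/(2*t)) := Real.exp_pos _
    rw [Real.log_mul (by positivity) hH.ne', Real.log_mul (by positivity) h2.ne',
        Real.log_mul hC.ne' h1.ne', Real.log_exp, Real.log_rpow hy']
  rw [hev.deriv_eq]
  have hHD : HasDerivAt (fun y' => Real.log (Hf α (x'*y'/t^2)))
      (Hf1 α (x'*y/t^2) * (x'/t^2) / Hf α (x'*y/t^2)) y := by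
    have hinner : HasDerivAt (fun y' : ℝ => x'*y'/t^2) (x'/t^2) y := by
      simpa using ((hasDerivAt_id y).const_mul x').div_const (t^2)
    have h2 := (hasDerivAt_Hf hα (x'*y/t^2)).comp y hinner
    have hH : 0 < Hf α (x'*y/t^2) := Hf_pos hα (by positivity)
    have h3 := h2.log hH.ne'
    simpa [Function.comp] using h3
  have hlog : HasDerivAt (fun y' : ℝ => α * Real.log y') (α * y⁻¹) y := by
    simpa using (Real.hasDerivAt_log hy.ne').const_mul α
  have hlin : HasDerivAt (fun y' : ℝ => -(x'+y')/(2*t)) ((-1)/(2*t)) y := by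
    simpa using (((hasDerivAt_id y).const_add x').neg).div_const (2*t)
  exact ((((hlog.const_add (Real.log ((1/2) * t^(-α-1)))).add hlin).add hHD)).deriv

/-- For `α ≥ 0`, `t > 0` and `x, y > 0`, the mixed second partial derivative
`∂²/∂x∂y log q_t(x,y)` is strictly positive. -/
theorem stmt4 (α : ℝ) (hα : 0 ≤ α) (t : ℝ) (ht : 0 < t)
    (x y : ℝ) (hx : 0 < x) (hy : 0 < y) :
    0 < deriv (fun x' => deriv (fun y' => Real.log (qK α t x' y')) y) x := by
  have ht2 : (0:ℝ) < t^2 := by positivity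
  have hev : (fun x' => deriv (fun y' => Real.log (qK α t x' y')) y) =ᶠ[nhds x]
      (fun x' => α * y⁻¹ + (-1)/(2*t) + Hf1 α (x'*y/t^2) * (x'/t^2) / Hf α (x'*y/t^2)) := by
    filter_upwards [eventually_gt_nhds hx] with x' hx'
    exact inner_deriv hα ht hx' hy
  rw [hev.deriv_eq]
  have hupos : 0 < x*y/t^2 := by positivity
  have hm : HasDerivAt (fun x' : ℝ => x'*y/t^2) (y/t^2) x := by
    simpa using ((hasDerivAt_id x).mul_const y).div_const (t^2)
  have hA1 : HasDerivAt (fun x' => Hf1 α (x'*y/t^2)) (Hf2 α (x*y/t^2) * (y/t^2)) x := by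
    have := (hasDerivAt_Hf1 hα (x*y/t^2)).comp x hm
    exact this
  have hBden : HasDerivAt (fun x' => Hf α (x'*y/t^2)) (Hf1 α (x*y/t^2) * (y/t^2)) x := by
    have := (hasDerivAt_Hf hα (x*y/t^2)).comp x hm
    exact this
  have hfrac : HasDerivAt (fun x' : ℝ => x'/t^2) (1/t^2) x := by
    simpa using (hasDerivAt_id x).div_const (t^2)
  have hnum := hA1.mul hfrac
  have hHne : Hf α (x*y/t^2) ≠ 0 := (Hf_pos hα hupos.le).ne'
  have hdiv := hnum.div hBden hHne
  have hfinal := hdiv.const_add (α * y⁻¹ + (-1)/(2*t))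
  have hfd := hfinal.deriv
  simp only [Pi.mul_apply, Pi.div_apply] at hfd
  rw [hfd]
  set a := Hf α (x*y/t^2) with ha
  set b := Hf1 α (x*y/t^2) with hb
  set c := Hf2 α (x*y/t^2) with hc
  have hkey := key_ineq hα hupos
  rw [← hb, ← hc] at hkey
  have hN : (c * (y/t^2) * (x/t^2) + b * (1/t^2)) * a - b * (x/t^2) * (b * (y/t^2))
      = (a * (b + (x*y/t^2) * c) - (x*y/t^2) * b^2) / t^2 := by
    field_simp
    ring
  rw [hN]
  have hnumpos : 0 < a * (b + (x*y/t^2) * c) - (x*y/t^2) * b^2 := by linarith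
  exact div_pos (div_pos hnumpos ht2) (by positivity)
end

section
/- Fix α ≥ 0 and t > 0. For all x, y > 0, the mixed partial derivative ∂²/∂x∂y of log p_t(x,y) is nonnegative, where p_t is the index-α Bessel transition density. -/
/-- The index-`α` Bessel transition density:
`p_t(x,y) = t^{-α-1} y^{2α+1} e^{-(x²+y²)/(2t)} h_α(xy/t)`. -/
noncomputable def pBES (α t x y : ℝ) : ℝ :=
  t ^ (-α - 1) * y ^ (2 * α + 1) * Real.exp (-(x ^ 2 + y ^ 2) / (2 * t)) * hA α (x * y / t)

open Real

namespace Stmt12Aux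

/-- coefficients of the series `H`. -/
noncomputable def aC (α : ℝ) (n : ℕ) : ℝ :=
  (1/4) ^ n / ((n.factorial : ℝ) * Real.Gamma ((n : ℝ) + α + 1))

noncomputable def c1 (α : ℝ) (n : ℕ) : ℝ := aC α n * ((2 * n : ℕ) : ℝ)

noncomputable def H (α z : ℝ) : ℝ := ∑' n : ℕ, aC α n * z ^ (2 * n)
noncomputable def H1 (α z : ℝ) : ℝ := ∑' n : ℕ, c1 α n * z ^ (2 * n - 1)
noncomputable def H2 (α z : ℝ) : ℝ :=
  ∑' n : ℕ, c1 α n * ((2 * n - 1 : ℕ) : ℝ) * z ^ (2 * n - 1 - 1)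

lemma aC_pos {α : ℝ} (hα : 0 ≤ α) (n : ℕ) : 0 < aC α n := by
  apply div_pos (by positivity)
  exact mul_pos (by exact_mod_cast n.factorial_pos) (Real.Gamma_pos_of_pos (by positivity))

lemma gamma_fact_le {α : ℝ} (hα : 0 ≤ α) (n : ℕ) :
    (n.factorial : ℝ) * Real.Gamma (α + 1) ≤ Real.Gamma ((n : ℝ) + α + 1) := by
  induction n with
  | zero => simp
  | succ m ih =>
    have h1 : ((m : ℝ) + α + 1) ≠ 0 := by positivity
    have h2 : Real.Gamma (((m : ℝ)) + α + 1 + 1) = ((m : ℝ) + α + 1) * Real.Gamma ((m : ℝ) + α + 1) :=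
      Real.Gamma_add_one h1
    have h3 : ((m + 1 : ℕ) : ℝ) + α + 1 = ((m : ℝ) + α + 1) + 1 := by push_cast; ring
    rw [h3, h2]
    have hΓ : 0 < Real.Gamma (α + 1) := Real.Gamma_pos_of_pos (by positivity)
    calc ((m + 1).factorial : ℝ) * Real.Gamma (α + 1)
        = ((m : ℝ) + 1) * ((m.factorial : ℝ) * Real.Gamma (α + 1)) := by
          push_cast [Nat.factorial_succ]; ring
      _ ≤ ((m : ℝ) + α + 1) * ((m.factorial : ℝ) * Real.Gamma (α + 1)) := by
          apply mul_le_mul_of_nonneg_right (by linarith)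
          positivity
      _ ≤ ((m : ℝ) + α + 1) * Real.Gamma ((m : ℝ) + α + 1) := by
          apply mul_le_mul_of_nonneg_left ih (by positivity)

lemma aC_le {α : ℝ} (hα : 0 ≤ α) (n : ℕ) :
    aC α n ≤ (1/4) ^ n / ((n.factorial : ℝ) ^ 2 * Real.Gamma (α + 1)) := by
  have hΓ : 0 < Real.Gamma (α + 1) := Real.Gamma_pos_of_pos (by positivity)
  have hf : (1 : ℝ) ≤ (n.factorial : ℝ) := by exact_mod_cast n.factorial_pos
  apply div_le_div_of_nonneg_left (by positivity) (by positivity)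
  calc (n.factorial : ℝ) ^ 2 * Real.Gamma (α + 1)
        = (n.factorial : ℝ) * ((n.factorial : ℝ) * Real.Gamma (α + 1)) := by ring
      _ ≤ (n.factorial : ℝ) * Real.Gamma ((n : ℝ) + α + 1) :=
          mul_le_mul_of_nonneg_left (gamma_fact_le hα n) (by positivity)

/-- master majorant: `∑ 4 (n+1)² aₙ rⁿ` converges for every `r ≥ 0`. -/
lemma summable_M {α : ℝ} (hα : 0 ≤ α) {r : ℝ} (hr : 0 ≤ r) :
    Summable (fun n : ℕ => 4 * ((n : ℝ) + 1) ^ 2 * aC α n * r ^ n) := by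
  have hΓ : 0 < Real.Gamma (α + 1) := Real.Gamma_pos_of_pos (by positivity)
  apply Summable.of_nonneg_of_le
    (fun n => by have := (aC_pos hα n).le; positivity)
    (fun n => ?_)
    (((Real.summable_pow_div_factorial r).mul_left (4 / Real.Gamma (α + 1))))
  have h2 : ((n : ℝ) + 1) ≤ 2 ^ n := by
    exact_mod_cast Nat.succ_le_of_lt (Nat.lt_two_pow_self (n := n))
  have hkey : ((n : ℝ) + 1) ^ 2 * (1/4) ^ n ≤ 1 := by
    calc ((n : ℝ) + 1) ^ 2 * (1/4) ^ n ≤ ((2:ℝ) ^ n) ^ 2 * (1/4) ^ n := by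
          gcongr
      _ = ((4:ℝ) * (1/4)) ^ n := by rw [← pow_mul, pow_mul', ← mul_pow]; norm_num
      _ = 1 := by norm_num
  have hf1 : (1 : ℝ) ≤ (n.factorial : ℝ) := by exact_mod_cast n.factorial_pos
  calc 4 * ((n : ℝ) + 1) ^ 2 * aC α n * r ^ n
      ≤ 4 * ((n : ℝ) + 1) ^ 2 * ((1/4) ^ n / ((n.factorial : ℝ) ^ 2 * Real.Gamma (α + 1))) * r ^ n := by
        gcongr
        exact aC_le hα n
    _ = (((n : ℝ) + 1) ^ 2 * (1/4) ^ n) * (4 * r ^ n / ((n.factorial : ℝ) ^ 2 * Real.Gamma (α + 1))) := by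
        ring
    _ ≤ 1 * (4 * r ^ n / ((n.factorial : ℝ) ^ 2 * Real.Gamma (α + 1))) := by
        gcongr
    _ ≤ 4 / Real.Gamma (α + 1) * (r ^ n / n.factorial) := by
        rw [one_mul, div_mul_div_comm]
        apply div_le_div_of_nonneg_left (by positivity) (by positivity)
        calc Real.Gamma (α + 1) * (n.factorial : ℝ) = (n.factorial : ℝ) * Real.Gamma (α + 1) := by
              ring
          _ ≤ (n.factorial : ℝ) ^ 2 * Real.Gamma (α + 1) := by
              have : (n.factorial : ℝ) ≤ (n.factorial : ℝ) ^ 2 := by nlinarith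
              exact mul_le_mul_of_nonneg_right this hΓ.le



section Generic
variable (c : ℕ → ℝ) (e : ℕ → ℕ)

lemma gen_summable
    (hs : ∀ r : ℝ, 0 < r → Summable (fun n => |c n| * ((e n : ℝ) + 1) * r ^ e n)) (x : ℝ) :
    Summable (fun n => c n * x ^ e n) := by
  set R : ℝ := |x| + 1 with hRdef
  have hR0 : 0 < R := by positivity
  apply Summable.of_norm_bounded (hs R hR0)
  intro n
  rw [norm_mul, norm_pow, Real.norm_eq_abs, Real.norm_eq_abs]
  calc |c n| * |x| ^ e n ≤ |c n| * R ^ e n := by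
        gcongr
        all_goals first
          | exact abs_nonneg x
          | linarith [abs_nonneg x]
    _ ≤ |c n| * ((e n : ℝ) + 1) * R ^ e n := by
        have : |c n| * R ^ e n = |c n| * 1 * R ^ e n := by ring
        rw [this]
        gcongr
        have : (0:ℝ) ≤ (e n : ℝ) := Nat.cast_nonneg _
        linarith

lemma gen_hasDerivAt
    (hs : ∀ r : ℝ, 0 < r → Summable (fun n => |c n| * ((e n : ℝ) + 1) * r ^ e n)) (z : ℝ) :
    HasDerivAt (fun x => ∑' n, c n * x ^ e n)
      (∑' n, c n * (e n : ℝ) * z ^ (e n - 1)) z := by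
  set R : ℝ := |z| + 1 with hRdef
  have hR0 : 0 < R := by positivity
  have hR1 : 1 ≤ R := by
    have := abs_nonneg z
    simp only [hRdef]
    linarith
  have hz : z ∈ Metric.ball (0 : ℝ) R := by
    simp [Real.dist_eq, hRdef]
  apply hasDerivAt_tsum_of_isPreconnected (hs R hR0) Metric.isOpen_ball
    ((convex_ball (0:ℝ) R).isPreconnected) ?_ ?_ hz ?_ hz
  · intro n y _
    simpa [mul_assoc] using (hasDerivAt_pow (e n) y).const_mul (c n)
  · intro n y hy
    have hyR : |y| ≤ R := by
      rw [Metric.mem_ball, Real.dist_eq, sub_zero] at hy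
      exact hy.le
    rw [Real.norm_eq_abs, abs_mul, abs_mul, abs_pow, Nat.abs_cast]
    calc |c n| * (e n : ℝ) * |y| ^ (e n - 1)
        ≤ |c n| * ((e n : ℝ) + 1) * R ^ (e n - 1) := by
          gcongr
          all_goals first
            | exact abs_nonneg y
            | exact hyR
            | linarith
    _ ≤ |c n| * ((e n : ℝ) + 1) * R ^ e n := by
          gcongr
          all_goals first
            | exact hR1
            | exact Nat.sub_le _ _
  · exact gen_summable c e hs z

end Generic

lemma hsH {α : ℝ} (hα : 0 ≤ α) :
    ∀ r : ℝ, 0 < r →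
      Summable (fun n : ℕ => |aC α n| * (((2 * n : ℕ) : ℝ) + 1) * r ^ (2 * n)) := by
  intro r hr
  apply Summable.of_nonneg_of_le (fun n => by positivity) (fun n => ?_)
    (summable_M hα (r := r ^ 2) (by positivity))
  have ha := aC_pos hα n
  rw [abs_of_pos ha, pow_mul]
  have hc : (((2 * n : ℕ) : ℝ) + 1) ≤ 4 * ((n : ℝ) + 1) ^ 2 := by
    push_cast
    nlinarith [Nat.cast_nonneg (α := ℝ) n, sq_nonneg ((n : ℝ))]
  calc aC α n * (((2 * n : ℕ) : ℝ) + 1) * (r ^ 2) ^ n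
      = ((((2 * n : ℕ) : ℝ) + 1)) * (aC α n * (r ^ 2) ^ n) := by ring
    _ ≤ (4 * ((n : ℝ) + 1) ^ 2) * (aC α n * (r ^ 2) ^ n) :=
        mul_le_mul_of_nonneg_right hc (by positivity)
    _ = 4 * ((n : ℝ) + 1) ^ 2 * aC α n * (r ^ 2) ^ n := by ring

lemma hsH1 {α : ℝ} (hα : 0 ≤ α) :
    ∀ r : ℝ, 0 < r →
      Summable (fun n : ℕ => |c1 α n| * (((2 * n - 1 : ℕ) : ℝ) + 1) * r ^ (2 * n - 1)) := by
  intro r hr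
  set s : ℝ := max r 1 with hsdef
  have hs1 : (1 : ℝ) ≤ s := le_max_right r 1
  have hrs : r ≤ s := le_max_left r 1
  apply Summable.of_nonneg_of_le (fun n => by positivity) (fun n => ?_)
    (summable_M hα (r := s ^ 2) (by positivity))
  have ha := aC_pos hα n
  have hc1 : |c1 α n| = aC α n * ((2 * n : ℕ) : ℝ) := by
    rw [c1, abs_of_nonneg (by positivity)]
  have h1 : ((2 * n - 1 : ℕ) : ℝ) ≤ ((2 * n : ℕ) : ℝ) :=
    Nat.cast_le.mpr (Nat.sub_le _ _)
  have hpow : r ^ (2 * n - 1) ≤ s ^ (2 * n) :=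
    (pow_le_pow_left₀ hr.le hrs _).trans (pow_le_pow_right₀ hs1 (Nat.sub_le _ _))
  have hcoef : ((2 * n : ℕ) : ℝ) * (((2 * n : ℕ) : ℝ) + 1) ≤ 4 * ((n : ℝ) + 1) ^ 2 := by
    push_cast
    nlinarith [Nat.cast_nonneg (α := ℝ) n]
  rw [hc1]
  calc aC α n * ((2 * n : ℕ) : ℝ) * (((2 * n - 1 : ℕ) : ℝ) + 1) * r ^ (2 * n - 1)
      ≤ aC α n * ((2 * n : ℕ) : ℝ) * (((2 * n : ℕ) : ℝ) + 1) * s ^ (2 * n) := by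
        gcongr
    _ = (((2 * n : ℕ) : ℝ) * (((2 * n : ℕ) : ℝ) + 1)) * (aC α n * s ^ (2 * n)) := by ring
    _ ≤ (4 * ((n : ℝ) + 1) ^ 2) * (aC α n * s ^ (2 * n)) :=
        mul_le_mul_of_nonneg_right hcoef (by positivity)
    _ = 4 * ((n : ℝ) + 1) ^ 2 * aC α n * (s ^ 2) ^ n := by rw [← pow_mul]; ring

lemma summable_H {α : ℝ} (hα : 0 ≤ α) (z : ℝ) :
    Summable (fun n : ℕ => aC α n * z ^ (2 * n)) :=
  gen_summable (aC α) (fun n => 2 * n) (hsH hα) z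

lemma hasDerivAt_H {α : ℝ} (hα : 0 ≤ α) (z : ℝ) : HasDerivAt (H α) (H1 α z) z :=
  gen_hasDerivAt (aC α) (fun n => 2 * n) (hsH hα) z

lemma hasDerivAt_H1 {α : ℝ} (hα : 0 ≤ α) (z : ℝ) : HasDerivAt (H1 α) (H2 α z) z :=
  gen_hasDerivAt (c1 α) (fun n => 2 * n - 1) (hsH1 hα) z

lemma term_nonneg {α : ℝ} (hα : 0 ≤ α) (z : ℝ) (n : ℕ) : 0 ≤ aC α n * z ^ (2 * n) := by
  rw [pow_mul]
  exact mul_nonneg (aC_pos hα n).le (by positivity)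

lemma H_pos {α : ℝ} (hα : 0 ≤ α) (z : ℝ) : 0 < H α z := by
  have h0 : aC α 0 * z ^ (2 * 0) = aC α 0 := by norm_num
  calc (0 : ℝ) < aC α 0 := aC_pos hα 0
    _ = aC α 0 * z ^ (2 * 0) := h0.symm
    _ ≤ H α z := Summable.le_tsum (summable_H hα z) 0 (fun j _ => term_nonneg hα z j)

lemma cs_tsum (s : ℕ → ℝ) (hs : ∀ n, 0 ≤ s n)
    (hB : Summable (fun n => ((2 * n : ℕ) : ℝ) * s n))
    (hH : Summable s)
    (hAs : Summable (fun n => ((2 * n : ℕ) : ℝ) ^ 2 * s n)) :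
    (∑' n, ((2 * n : ℕ) : ℝ) * s n) ^ 2 ≤ (∑' n, s n) * ∑' n, ((2 * n : ℕ) : ℝ) ^ 2 * s n := by
  set TH := ∑' n, s n with hTH
  set TA := ∑' n, ((2 * n : ℕ) : ℝ) ^ 2 * s n with hTA
  have hTH0 : 0 ≤ TH := tsum_nonneg hs
  have hTA0 : 0 ≤ TA := tsum_nonneg (fun n => mul_nonneg (by positivity) (hs n))
  have hB0 : 0 ≤ ∑' n, ((2 * n : ℕ) : ℝ) * s n := tsum_nonneg (fun n => mul_nonneg (by positivity) (hs n))
  have hstep : ∀ F : Finset ℕ, (∑ n ∈ F, ((2 * n : ℕ) : ℝ) * s n) ≤ Real.sqrt (TH * TA) := by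
    intro F
    have hcs := Finset.sum_mul_sq_le_sq_mul_sq F (fun n => Real.sqrt (s n))
      (fun n => ((2 * n : ℕ) : ℝ) * Real.sqrt (s n))
    have e1 : ∀ n, Real.sqrt (s n) * (((2 * n : ℕ) : ℝ) * Real.sqrt (s n)) =
        ((2 * n : ℕ) : ℝ) * s n := by
      intro n
      rw [show Real.sqrt (s n) * (((2 * n : ℕ) : ℝ) * Real.sqrt (s n)) =
        ((2 * n : ℕ) : ℝ) * (Real.sqrt (s n) * Real.sqrt (s n)) from by ring,
        Real.mul_self_sqrt (hs n)]
    have e2 : ∀ n, Real.sqrt (s n) ^ 2 = s n := fun n => Real.sq_sqrt (hs n)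
    have e3 : ∀ n, (((2 * n : ℕ) : ℝ) * Real.sqrt (s n)) ^ 2 =
        ((2 * n : ℕ) : ℝ) ^ 2 * s n := by
      intro n
      rw [mul_pow, Real.sq_sqrt (hs n)]
    simp only [e1, e2, e3] at hcs
    have h4 : (∑ n ∈ F, ((2 * n : ℕ) : ℝ) * s n) ^ 2 ≤ TH * TA := by
      refine hcs.trans ?_
      apply mul_le_mul
      · exact Summable.sum_le_tsum F (fun n _ => hs n) hH
      · exact Summable.sum_le_tsum F (fun n _ => mul_nonneg (by positivity) (hs n)) hAs
      · exact Finset.sum_nonneg (fun n _ => mul_nonneg (by positivity) (hs n))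
      · exact hTH0
    rcases le_or_gt (∑ n ∈ F, ((2 * n : ℕ) : ℝ) * s n) 0 with h | h
    · exact h.trans (Real.sqrt_nonneg _)
    · rw [show TH * TA = Real.sqrt (TH * TA) ^ 2 from
        (Real.sq_sqrt (mul_nonneg hTH0 hTA0)).symm] at h4
      exact (pow_le_pow_iff_left₀ h.le (Real.sqrt_nonneg _) (by norm_num)).mp h4
  have hle : (∑' n, ((2 * n : ℕ) : ℝ) * s n) ≤ Real.sqrt (TH * TA) :=
    Summable.tsum_le_of_sum_le hB hstep
  calc (∑' n, ((2 * n : ℕ) : ℝ) * s n) ^ 2 ≤ Real.sqrt (TH * TA) ^ 2 := by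
        exact pow_le_pow_left₀ hB0 hle 2
    _ = TH * TA := Real.sq_sqrt (mul_nonneg hTH0 hTA0)

lemma key {α : ℝ} (hα : 0 ≤ α) {z : ℝ} (hz : 0 < z) :
    0 ≤ H α z * H1 α z + z * (H2 α z * H α z - H1 α z ^ 2) := by
  set s : ℕ → ℝ := fun n => aC α n * z ^ (2 * n) with hsdef
  have hs_nn : ∀ n, 0 ≤ s n := term_nonneg hα z
  have sumH : Summable s := summable_H hα z
  have sumB : Summable (fun n => ((2 * n : ℕ) : ℝ) * s n) := by
    apply Summable.of_nonneg_of_le (fun n => mul_nonneg (by positivity) (hs_nn n)) (fun n => ?_)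
      (summable_M hα (r := z ^ 2) (by positivity))
    have hc : ((2 * n : ℕ) : ℝ) ≤ 4 * ((n : ℝ) + 1) ^ 2 := by
      push_cast; nlinarith [Nat.cast_nonneg (α := ℝ) n]
    calc ((2 * n : ℕ) : ℝ) * s n ≤ (4 * ((n : ℝ) + 1) ^ 2) * s n :=
          mul_le_mul_of_nonneg_right hc (hs_nn n)
      _ = 4 * ((n : ℝ) + 1) ^ 2 * aC α n * (z ^ 2) ^ n := by
          rw [hsdef]; rw [← pow_mul]; ring
  have sumA : Summable (fun n => ((2 * n : ℕ) : ℝ) ^ 2 * s n) := by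
    apply Summable.of_nonneg_of_le (fun n => mul_nonneg (by positivity) (hs_nn n)) (fun n => ?_)
      (summable_M hα (r := z ^ 2) (by positivity))
    have hc : ((2 * n : ℕ) : ℝ) ^ 2 ≤ 4 * ((n : ℝ) + 1) ^ 2 := by
      push_cast; nlinarith [Nat.cast_nonneg (α := ℝ) n]
    calc ((2 * n : ℕ) : ℝ) ^ 2 * s n ≤ (4 * ((n : ℝ) + 1) ^ 2) * s n :=
          mul_le_mul_of_nonneg_right hc (hs_nn n)
      _ = 4 * ((n : ℝ) + 1) ^ 2 * aC α n * (z ^ 2) ^ n := by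
          rw [hsdef]; rw [← pow_mul]; ring
  have hHs : H α z = ∑' n, s n := rfl
  have e1 : z * H1 α z = ∑' n, ((2 * n : ℕ) : ℝ) * s n := by
    rw [H1, ← tsum_mul_left]
    apply tsum_congr
    intro n
    rcases n with _ | m
    · simp [c1, hsdef]
    · have he : 2 * (m + 1) - 1 = 2 * m + 1 := by omega
      have he2 : 2 * (m + 1) = 2 * m + 2 := by omega
      rw [c1, hsdef]
      simp only [he, he2]
      push_cast
      ring
  have e2 : z ^ 2 * H2 α z = ∑' n, (((2 * n : ℕ) : ℝ) ^ 2 - ((2 * n : ℕ) : ℝ)) * s n := by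
    rw [H2, ← tsum_mul_left]
    apply tsum_congr
    intro n
    rcases n with _ | m
    · simp [c1, hsdef]
    · have he : 2 * (m + 1) - 1 - 1 = 2 * m := by omega
      have he1 : 2 * (m + 1) - 1 = 2 * m + 1 := by omega
      have he2 : 2 * (m + 1) = 2 * m + 2 := by omega
      rw [c1, hsdef]
      simp only [he, he1, he2]
      push_cast
      ring
  have e2' : z ^ 2 * H2 α z =
      (∑' n, ((2 * n : ℕ) : ℝ) ^ 2 * s n) - ∑' n, ((2 * n : ℕ) : ℝ) * s n := by
    rw [e2, show (fun n : ℕ => (((2 * n : ℕ) : ℝ) ^ 2 - ((2 * n : ℕ) : ℝ)) * s n) =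
      (fun n : ℕ => ((2 * n : ℕ) : ℝ) ^ 2 * s n - ((2 * n : ℕ) : ℝ) * s n) from
      funext (fun n => by ring), Summable.tsum_sub sumA sumB]
  have hcs := cs_tsum s hs_nn sumB sumH sumA
  rw [← mul_nonneg_iff_of_pos_left hz]
  have expand : z * (H α z * H1 α z + z * (H2 α z * H α z - H1 α z ^ 2)) =
      (z * H1 α z) * H α z + (z ^ 2 * H2 α z) * H α z - (z * H1 α z) ^ 2 := by ring
  rw [expand, e1, e2', hHs]
  nlinarith [hcs]

lemma hA_eq (α z : ℝ) : hA α z = (2 : ℝ) ^ (-α) * H α z := by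
  unfold hA H
  congr 1
  apply tsum_congr
  intro n
  have h4 : (2 : ℝ) ^ (2 * n) = 4 ^ n := by rw [pow_mul]; norm_num
  rw [div_pow, h4, aC, one_div, inv_pow]
  ring

lemma hA_pos {α : ℝ} (hα : 0 ≤ α) (z : ℝ) : 0 < hA α z := by
  rw [hA_eq]
  exact mul_pos (Real.rpow_pos_of_pos two_pos _) (H_pos hα z)

lemma inner_hasDerivAt (α : ℝ) (hα : 0 ≤ α) {t : ℝ} (ht : 0 < t) {y : ℝ} (hy : 0 < y)
    (x' : ℝ) :
    HasDerivAt (fun y' => Real.log (pBES α t x' y'))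
      ((2 * α + 1) / y - y / t + x' / t * (H1 α (x' * y / t) / H α (x' * y / t))) y := by
  set φ : ℝ → ℝ := fun y' =>
    ((-α - 1) * Real.log t + (-α) * Real.log 2 + (-(x' ^ 2) / (2 * t))) +
      ((2 * α + 1) * Real.log y' +
        (-(1 / (2 * t)) * y' ^ 2 + Real.log (H α (x' * y' / t)))) with hφdef
  have hφeq : ∀ y' ∈ Set.Ioi (0 : ℝ), Real.log (pBES α t x' y') = φ y' := by
    intro y' hy'
    have hy' : (0 : ℝ) < y' := hy'
    have hT1 : (0 : ℝ) < t ^ (-α - 1) := Real.rpow_pos_of_pos ht _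
    have hT2 : (0 : ℝ) < y' ^ (2 * α + 1) := Real.rpow_pos_of_pos hy' _
    have hT4 : (0 : ℝ) < hA α (x' * y' / t) := hA_pos hα _
    rw [pBES, Real.log_mul (by positivity) hT4.ne',
      Real.log_mul (by positivity) (Real.exp_ne_zero _),
      Real.log_mul hT1.ne' hT2.ne', Real.log_rpow ht, Real.log_rpow hy', Real.log_exp,
      hA_eq, Real.log_mul (by positivity) (H_pos hα _).ne', Real.log_rpow two_pos, hφdef]
    ring
  have h2 : HasDerivAt (fun y' => (2 * α + 1) * Real.log y') ((2 * α + 1) * y⁻¹) y :=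
    (Real.hasDerivAt_log hy.ne').const_mul (2 * α + 1)
  have h3 : HasDerivAt (fun y' : ℝ => -(1 / (2 * t)) * y' ^ 2)
      (-(1 / (2 * t)) * (2 * y ^ 1)) y := by
    simpa using (hasDerivAt_pow 2 y).const_mul (-(1 / (2 * t)))
  have hi : HasDerivAt (fun y' => x' * y' / t) (x' * 1 / t) y :=
    ((hasDerivAt_id y).const_mul x').div_const t
  have hcomp : HasDerivAt (fun y' => H α (x' * y' / t))
      (H1 α (x' * y / t) * (x' * 1 / t)) y := (hasDerivAt_H hα (x' * y / t)).comp (h := fun y' => x' * y' / t) y hi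
  have hlog : HasDerivAt (fun y' => Real.log (H α (x' * y' / t)))
      (H1 α (x' * y / t) * (x' * 1 / t) / H α (x' * y / t)) y :=
    hcomp.log (H_pos hα _).ne'
  have hd : HasDerivAt φ
      (0 + ((2 * α + 1) * y⁻¹ +
        (-(1 / (2 * t)) * (2 * y ^ 1) +
          H1 α (x' * y / t) * (x' * 1 / t) / H α (x' * y / t)))) y := by
    rw [hφdef]
    exact (hasDerivAt_const y _).add (h2.add (h3.add hlog))
  have hev : (fun y' => Real.log (pBES α t x' y')) =ᶠ[nhds y] φ := by
    filter_upwards [Ioi_mem_nhds hy] with y' hy' using hφeq y' hy'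
  have hfin := hd.congr_of_eventuallyEq hev
  convert hfin using 1
  · rfl
  · rfl
  have hH := (H_pos hα (x' * y / t)).ne'
  field_simp
  ring

end Stmt12Aux

/-- For `α ≥ 0`, `t > 0` and `x, y > 0`, the mixed partial derivative
`∂²/∂x∂y log p_t(x,y)` is nonnegative. -/
theorem stmt12 (α : ℝ) (hα : 0 ≤ α) (t : ℝ) (ht : 0 < t) (x y : ℝ) (hx : 0 < x) (hy : 0 < y) :
    0 ≤ deriv (fun x' => deriv (fun y' => Real.log (pBES α t x' y')) y) x := by
  open Stmt12Aux in
  have hfun : (fun x' => deriv (fun y' => Real.log (pBES α t x' y')) y) =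
      (fun x' => (2 * α + 1) / y - y / t +
        x' / t * (H1 α (x' * y / t) / H α (x' * y / t))) :=
    funext fun x' => (inner_hasDerivAt α hα ht hy x').deriv
  rw [hfun]
  have hzpos : 0 < x * y / t := by positivity
  have hi : HasDerivAt (fun x' => x' * y / t) (1 * y / t) x :=
    ((hasDerivAt_id x).mul_const y).div_const t
  have hq : HasDerivAt (fun w => H1 α w / H α w)
      ((H2 α (x * y / t) * H α (x * y / t) - H1 α (x * y / t) * H1 α (x * y / t)) /
        H α (x * y / t) ^ 2) (x * y / t) :=
    (hasDerivAt_H1 hα _).div (hasDerivAt_H hα _) (H_pos hα _).ne'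
  have hqc : HasDerivAt (fun x' => H1 α (x' * y / t) / H α (x' * y / t))
      (((H2 α (x * y / t) * H α (x * y / t) - H1 α (x * y / t) * H1 α (x * y / t)) /
        H α (x * y / t) ^ 2) * (1 * y / t)) x := hq.comp (h := fun x' => x' * y / t) x hi
  have hu : HasDerivAt (fun x' : ℝ => x' / t) (1 / t) x := (hasDerivAt_id x).div_const t
  have hprod : HasDerivAt (fun x' => x' / t * (H1 α (x' * y / t) / H α (x' * y / t))) _ x := hu.mul hqc
  have hfull := hprod.const_add ((2 * α + 1) / y - y / t)
  rw [hfull.deriv]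
  have hH := H_pos hα (x * y / t)
  have hk := key hα hzpos
  have heq : 1 / t * (H1 α (x * y / t) / H α (x * y / t)) +
      x / t * (((H2 α (x * y / t) * H α (x * y / t) -
        H1 α (x * y / t) * H1 α (x * y / t)) / H α (x * y / t) ^ 2) * (1 * y / t)) =
      (H α (x * y / t) * H1 α (x * y / t) +
        (x * y / t) * (H2 α (x * y / t) * H α (x * y / t) - H1 α (x * y / t) ^ 2)) /
        (t * H α (x * y / t) ^ 2) := by
    field_simp
  rw [heq]
  exact div_nonneg hk (by positivity)
end
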